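/- Let δ ∈ (0,1), 𝒦 a finite set, x : 𝒦 → ℝ≥0, with f and dominant maximizer K* as above, |K*| = m ≥ 2. Suppose k ∉ K* (k is non-dominant) and j ∈ K* (j is dominant), and suppose there exist b ∈ K* with f(K*\{b}) ≤ f(K*) and values satisfying x k ≥ x j ≥ x b. Then we reach a contradiction; that is, it is impossible that a transfer goes from a non-dominant subserver k to a dominant subserver j when x k ≥ x j and the bottleneck inequality f(K*\{b}) ≤ f(K*) holds with x j ≥ x b. -/

import Mathlib

theorem no_transfer_nondominant_to_dominant {ι : Type*} [Fintype ι] [DecidableEq ι]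
    (δ : ℝ) (hδ0 : 0 < δ) (hδ1 : δ < 1) (x : ι → ℝ) (hx : ∀ i, 0 ≤ x i)
    (hpos : 0 < ∑ i, x i)
    (f : Finset ι → ℝ)
    (hf : ∀ K : Finset ι, f K = ((1 + ((K.card : ℝ) - 1) * δ) / (K.card : ℝ)) * ∑ i ∈ K, x i)
    (Kstar : Finset ι) (hm : 2 ≤ Kstar.card)
    (hmax : ∀ K : Finset ι, K.Nonempty → f K ≤ f Kstar)
    (k j b : ι) (hk : k ∉ Kstar) (hj : j ∈ Kstar) (hb : b ∈ Kstar)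
    (hbneck : f (Kstar.erase b) ≤ f Kstar)
    (hkj : x j ≤ x k) (hjb : x b ≤ x j) :
    False := by
  set M : ℝ := (Kstar.card : ℝ) with hMdef
  have hM2 : (2:ℝ) ≤ M := by rw [hMdef]; exact_mod_cast hm
  have hMpos : (0:ℝ) < M := by linarith
  set S : ℝ := ∑ i ∈ Kstar, x i with hSdef
  have hSnn : 0 ≤ S := Finset.sum_nonneg (fun i _ => hx i)
  have hone : 1 ≤ Kstar.card := by omega
  have hcard_e : ((Kstar.erase b).card : ℝ) = M - 1 := by
    rw [Finset.card_erase_of_mem hb, Nat.cast_sub hone, Nat.cast_one]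
  have hsum_e : ∑ i ∈ Kstar.erase b, x i = S - x b := by
    rw [hSdef, Finset.sum_erase_eq_sub hb]
  have hcard_i : ((insert k Kstar).card : ℝ) = M + 1 := by
    rw [Finset.card_insert_of_notMem hk]; push_cast; ring
  have hsum_i : ∑ i ∈ insert k Kstar, x i = x k + S := by
    rw [hSdef, Finset.sum_insert hk]
  -- rewrite bottleneck inequality
  have h1 : ((1 + (M - 1 - 1) * δ) / (M - 1)) * (S - x b)
      ≤ ((1 + (M - 1) * δ) / M) * S := by
    have := hbneck
    rw [hf, hf, hcard_e, hsum_e] at this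
    exact this
  have h2 : ((1 + (M + 1 - 1) * δ) / (M + 1)) * (x k + S)
      ≤ ((1 + (M - 1) * δ) / M) * S := by
    have := hmax (insert k Kstar) ⟨j, Finset.mem_insert_of_mem hj⟩
    rw [hf, hf, hcard_i, hsum_i] at this
    exact this
  have hM1 : (0:ℝ) < M - 1 := by linarith
  have hM3 : (0:ℝ) < M + 1 := by linarith
  rw [div_mul_eq_mul_div, div_mul_eq_mul_div, div_le_div_iff₀ hM1 hMpos] at h1
  rw [div_mul_eq_mul_div, div_mul_eq_mul_div, div_le_div_iff₀ hM3 hMpos] at h2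
  -- hA : (1-δ) S ≤ M (1 + (M-2) δ) x b
  have hA : (1 - δ) * S ≤ M * (1 + (M - 2) * δ) * x b := by nlinarith [h1]
  -- hB : M (1 + M δ) x k ≤ (1-δ) S
  have hB : M * (1 + M * δ) * x k ≤ (1 - δ) * S := by nlinarith [h2]
  have hbk : x b ≤ x k := le_trans hjb hkj
  have hd : (0:ℝ) ≤ (M - 2) * δ := mul_nonneg (by linarith) hδ0.le
  have hc : (0:ℝ) ≤ M * (1 + (M - 2) * δ) := mul_nonneg hMpos.le (by linarith)
  have hbb := mul_le_mul_of_nonneg_left hbk hc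
  have key : (2 * M * δ) * x k ≤ (2 * M * δ) * 0 := by nlinarith [hA, hB, hbb]
  have hxk0 : x k ≤ 0 := le_of_mul_le_mul_left key (by positivity)
  have hxk : x k = 0 := le_antisymm hxk0 (hx k)
  have hxb : x b = 0 := le_antisymm (by linarith [hbk]) (hx b)
  have h0 : (1 - δ) * S ≤ (1 - δ) * 0 := by rw [hxb, mul_zero] at hA; linarith
  have hS0 : S = 0 := le_antisymm (le_of_mul_le_mul_left h0 (by linarith)) hSnn
  -- find i with 0 < x i
  obtain ⟨i, -, hi⟩ : ∃ i ∈ Finset.univ, 0 < x i := by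
    by_contra h
    push_neg at h
    have : ∑ i, x i ≤ 0 := Finset.sum_nonpos (fun i _ => h i (Finset.mem_univ i))
    linarith
  have hfi := hmax {i} ⟨i, Finset.mem_singleton_self i⟩
  rw [hf, hf] at hfi
  simp only [Finset.card_singleton, Nat.cast_one, Finset.sum_singleton] at hfi
  rw [← hMdef, ← hSdef, hS0, mul_zero] at hfi
  norm_num at hfi
  linarith
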